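/- For every natural number N, the sum of log p over all primes p ≤ N satisfies ∑_{p ≤ N, p prime} log p ≤ N · log 4. -/
import Mathlib

/-- Chebyshev's bound: for every natural number `N`,
`∑_{p ≤ N, p prime} log p ≤ N · log 4`. -/
theorem stmt9 (N : ℕ) :
    ∑ p ∈ Finset.filter Nat.Prime (Finset.range (N + 1)), Real.log p ≤ N * Real.log 4 := by
  have h := primorial_le_4_pow N
  have h' : Real.log (primorial N) ≤ Real.log (4 ^ N) := by
    apply Real.log_le_log (by exact_mod_cast primorial_pos N)
    exact_mod_cast h
  rw [Real.log_pow] at h'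
  refine le_trans (le_of_eq ?_) h'
  rw [primorial, Nat.cast_prod, Real.log_prod]
  · intro p hp
    simp only [Finset.mem_filter] at hp
    exact_mod_cast hp.2.pos.ne'
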